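/- For real x with 0 < 4x < 1 and natural number ν, the identity (1/√(1-4x)) · ((1-√(1-4x))/(2x))^ν = ∑_{k=0}^∞ C(ν+2k, k) x^k holds, where C(m,k) is the binomial coefficient. -/

import Mathlib

open Finset

noncomputable def cb : ℕ → ℝ := fun i => ((2 * i).choose i : ℝ)

lemma cb_rec (i : ℕ) : ((i : ℝ) + 1) * cb (i + 1) = 2 * (2 * i + 1) * cb i := by
  have h := Nat.succ_mul_centralBinom_succ i
  simp only [Nat.centralBinom] at h
  simp only [cb]
  exact_mod_cast h

lemma cb_nonneg (i : ℕ) : 0 ≤ cb i := by simp [cb]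

lemma sym_sum (n : ℕ) :
    2 * (∑ i ∈ range (n + 1), (i : ℝ) * (cb i * cb (n - i)))
      = n * ∑ i ∈ range (n + 1), cb i * cb (n - i) := by
  have h1 : ∑ i ∈ range (n + 1), (i : ℝ) * (cb i * cb (n - i))
      = ∑ i ∈ range (n + 1), ((n : ℝ) - i) * (cb i * cb (n - i)) := by
    rw [← Finset.sum_range_reflect (fun i => (i : ℝ) * (cb i * cb (n - i))) (n + 1)]
    simp only [Nat.add_sub_cancel]
    apply Finset.sum_congr rfl
    intro i hi
    simp only [Finset.mem_range] at hi
    have hi' : i ≤ n := by omega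
    have e1 : n - (n - i) = i := by omega
    have e2 : ((n - i : ℕ) : ℝ) = (n : ℝ) - i := by
      rw [Nat.cast_sub hi']
    rw [e1, e2]
    ring
  rw [two_mul]
  nth_rewrite 2 [h1]
  rw [← Finset.sum_add_distrib, Finset.mul_sum]
  apply Finset.sum_congr rfl
  intro i _
  ring

lemma conv_cb (n : ℕ) :
    ∑ i ∈ range (n + 1), cb i * cb (n - i) = 4 ^ n := by
  induction n with
  | zero => simp [cb]
  | succ n ih =>
    have key : ((n : ℝ) + 1) * ∑ i ∈ range (n + 2), cb i * cb (n + 1 - i)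
        = 4 * (((n : ℝ) + 1) * ∑ i ∈ range (n + 1), cb i * cb (n - i)) := by
      have h2 : ((n : ℝ) + 1) * ∑ i ∈ range (n + 2), cb i * cb (n + 1 - i)
          = 2 * ∑ i ∈ range (n + 2), (i : ℝ) * (cb i * cb (n + 1 - i)) := by
        rw [sym_sum (n + 1)]; push_cast; ring
      rw [h2]
      have h3 : ∑ i ∈ range (n + 2), (i : ℝ) * (cb i * cb (n + 1 - i))
          = ∑ i ∈ range (n + 1), ((i : ℝ) + 1) * cb (i + 1) * cb (n - i) := by
        rw [Finset.sum_range_succ' (fun i => (i : ℝ) * (cb i * cb (n + 1 - i))) (n + 1)]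
        simp only [Nat.cast_zero, zero_mul, add_zero]
        apply Finset.sum_congr rfl
        intro i _
        have e : n + 1 - (i + 1) = n - i := by omega
        rw [e]; push_cast; ring
      rw [h3]
      have h4 : ∑ i ∈ range (n + 1), ((i : ℝ) + 1) * cb (i + 1) * cb (n - i)
          = ∑ i ∈ range (n + 1), (2 * (2 * (i : ℝ) + 1)) * (cb i * cb (n - i)) := by
        apply Finset.sum_congr rfl
        intro i _
        rw [cb_rec i]; ring
      rw [h4]
      have h5 : ∑ i ∈ range (n + 1), (2 * (2 * (i : ℝ) + 1)) * (cb i * cb (n - i))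
          = 4 * (∑ i ∈ range (n + 1), (i : ℝ) * (cb i * cb (n - i)))
            + 2 * ∑ i ∈ range (n + 1), cb i * cb (n - i) := by
        rw [Finset.mul_sum, Finset.mul_sum, ← Finset.sum_add_distrib]
        apply Finset.sum_congr rfl
        intro i _
        ring
      rw [h5]
      have h6 := sym_sum n
      nlinarith [h6]
    have hne : ((n : ℝ) + 1) ≠ 0 := by positivity
    have := mul_left_cancel₀ hne (by rw [key]; ring_nf :
      ((n : ℝ) + 1) * ∑ i ∈ range (n + 2), cb i * cb (n + 1 - i)
        = ((n : ℝ) + 1) * (4 * ∑ i ∈ range (n + 1), cb i * cb (n - i)))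
    rw [this, ih]
    ring
open Finset

lemma choose_le_two_pow' (n k : ℕ) : n.choose k ≤ 2 ^ n := by
  rcases le_or_gt k n with h | h
  · calc n.choose k ≤ ∑ i ∈ range (n + 1), n.choose i :=
        Finset.single_le_sum (fun i _ => Nat.zero_le _) (Finset.mem_range.mpr (by omega))
    _ = 2 ^ n := Nat.sum_range_choose n
  · rw [Nat.choose_eq_zero_of_lt h]; exact Nat.zero_le _

lemma summable_f {x : ℝ} (hx : 0 ≤ x) (hx' : 4 * x < 1) (ν : ℕ) :
    Summable (fun k : ℕ => ((ν + 2 * k).choose k : ℝ) * x ^ k) := by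
  refine Summable.of_nonneg_of_le (fun k => by positivity) ?_
    ((summable_geometric_of_lt_one (by linarith) hx').mul_left ((2 : ℝ) ^ ν))
  · intro k
    have h1 : ((ν + 2 * k).choose k : ℝ) ≤ 2 ^ (ν + 2 * k) := by
      exact_mod_cast choose_le_two_pow' (ν + 2 * k) k
    have h2 : (2 : ℝ) ^ (ν + 2 * k) * x ^ k = 2 ^ ν * (4 * x) ^ k := by
      rw [pow_add, pow_mul, mul_pow, mul_assoc, ← mul_pow]; norm_num [mul_pow]
    calc ((ν + 2 * k).choose k : ℝ) * x ^ k ≤ 2 ^ (ν + 2 * k) * x ^ k := by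
          apply mul_le_mul_of_nonneg_right h1 (by positivity)
      _ = 2 ^ ν * (4 * x) ^ k := h2

lemma base0 {x : ℝ} (hx : 0 < x) (hx' : 4 * x < 1) :
    ∑' k : ℕ, ((0 + 2 * k).choose k : ℝ) * x ^ k = 1 / Real.sqrt (1 - 4 * x) := by
  have h14 : (0 : ℝ) < 1 - 4 * x := by linarith
  set s := Real.sqrt (1 - 4 * x) with hs_def
  have hs : 0 < s := Real.sqrt_pos.mpr h14
  have hs2 : s ^ 2 = 1 - 4 * x := Real.sq_sqrt h14.le
  have hsum : Summable (fun k : ℕ => cb k * x ^ k) := by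
    simpa [cb] using summable_f hx.le hx' 0
  have hnorm : Summable (fun k : ℕ => ‖cb k * x ^ k‖) := by
    refine hsum.congr fun k => ?_
    rw [Real.norm_of_nonneg (mul_nonneg (cb_nonneg k) (pow_nonneg hx.le k))]
  set B := ∑' k : ℕ, cb k * x ^ k with hB_def
  have hB2 : B * B = (1 - 4 * x)⁻¹ := by
    rw [hB_def, tsum_mul_tsum_eq_tsum_sum_range_of_summable_norm hnorm hnorm]
    have hterm : ∀ n : ℕ, ∑ k ∈ range (n + 1), cb k * x ^ k * (cb (n - k) * x ^ (n - k))
        = (4 * x) ^ n := by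
      intro n
      have : ∑ k ∈ range (n + 1), cb k * x ^ k * (cb (n - k) * x ^ (n - k))
          = (∑ k ∈ range (n + 1), cb k * cb (n - k)) * x ^ n := by
        rw [Finset.sum_mul]
        apply Finset.sum_congr rfl
        intro k hk
        have hk' : k ≤ n := by simp only [Finset.mem_range] at hk; omega
        have hxp : x ^ k * x ^ (n - k) = x ^ n := by
          rw [← pow_add]; congr 1; omega
        calc cb k * x ^ k * (cb (n - k) * x ^ (n - k))
            = cb k * cb (n - k) * (x ^ k * x ^ (n - k)) := by ring
          _ = cb k * cb (n - k) * x ^ n := by rw [hxp]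
      rw [this, conv_cb, mul_pow]
    rw [tsum_congr hterm, tsum_geometric_of_lt_one (by positivity) hx']
  have hBnonneg : 0 ≤ B :=
    tsum_nonneg fun k => mul_nonneg (cb_nonneg k) (pow_nonneg hx.le k)
  have hfac : (B - 1 / s) * (B + 1 / s) = 0 := by
    have h1s : (1 / s) * (1 / s) = (1 - 4 * x)⁻¹ := by
      rw [div_mul_div_comm, one_mul, ← sq, hs2]
      simp [one_div]
    linear_combination hB2 - h1s
  have hB : B = 1 / s := by
    rcases mul_eq_zero.mp hfac with h | h
    · linarith
    · exfalso
      have : 0 < B + 1 / s := by positivity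
      linarith
  rw [← hB, hB_def]
  apply tsum_congr
  intro k
  simp [cb]

lemma shift_choose (k : ℕ) : (0 + 2 * (k + 1)).choose (k + 1) = 2 * ((1 + 2 * k).choose k) := by
  have h1 := Nat.choose_succ_succ (2 * k + 1) k
  have h2 := Nat.choose_symm (show k ≤ 2 * k + 1 by omega)
  rw [show 2 * k + 1 - k = k + 1 from by omega] at h2
  simp only [Nat.succ_eq_add_one] at h1
  rw [show 0 + 2 * (k + 1) = 2 * k + 1 + 1 from by ring, show 1 + 2 * k = 2 * k + 1 from by ring]
  omega

lemma base1rel {x : ℝ} (hx : 0 < x) (hx' : 4 * x < 1) :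
    2 * x * ∑' k : ℕ, ((1 + 2 * k).choose k : ℝ) * x ^ k
      = (∑' k : ℕ, ((0 + 2 * k).choose k : ℝ) * x ^ k) - 1 := by
  have hf0 := summable_f hx.le hx' 0
  rw [hf0.tsum_eq_zero_add]
  have h : ∑' k : ℕ, ((0 + 2 * (k + 1)).choose (k + 1) : ℝ) * x ^ (k + 1)
      = ∑' k : ℕ, 2 * x * (((1 + 2 * k).choose k : ℝ) * x ^ k) :=
    tsum_congr fun k => by rw [shift_choose k]; push_cast; ring
  rw [h, tsum_mul_left]
  norm_num

lemma frec {x : ℝ} (hx : 0 < x) (hx' : 4 * x < 1) (ν : ℕ) :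
    ∑' k : ℕ, ((ν + 1 + 2 * k).choose k : ℝ) * x ^ k
      = (∑' k : ℕ, ((ν + 2 * k).choose k : ℝ) * x ^ k)
        + x * ∑' k : ℕ, ((ν + 2 + 2 * k).choose k : ℝ) * x ^ k := by
  have hf := summable_f hx.le hx' ν
  have hf1 := summable_f hx.le hx' (ν + 1)
  have hf2 := summable_f hx.le hx' (ν + 2)
  rw [hf1.tsum_eq_zero_add, hf.tsum_eq_zero_add]
  have hL : ∀ k : ℕ, ((ν + 1 + 2 * (k + 1)).choose (k + 1) : ℝ) * x ^ (k + 1)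
      = ((ν + 2 * (k + 1)).choose (k + 1) : ℝ) * x ^ (k + 1)
        + x * (((ν + 2 + 2 * k).choose k : ℝ) * x ^ k) := by
    intro k
    have hp : (ν + 1 + 2 * (k + 1)).choose (k + 1)
        = (ν + 2 * (k + 1)).choose (k + 1) + (ν + 2 + 2 * k).choose k := by
      have h1 := Nat.choose_succ_succ (ν + 2 * k + 2) k
      simp only [Nat.succ_eq_add_one] at h1
      rw [show ν + 1 + 2 * (k + 1) = ν + 2 * k + 2 + 1 from by ring,
        show ν + 2 * (k + 1) = ν + 2 * k + 2 from by ring,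
        show ν + 2 + 2 * k = ν + 2 * k + 2 from by ring]
      omega
    rw [hp]
    push_cast
    ring
  rw [tsum_congr hL, ((summable_nat_add_iff 1).mpr hf).tsum_add (hf2.mul_left x),
    tsum_mul_left]
  norm_num
  ring

theorem wilf_2_5_15 (x : ℝ) (hx : 0 < 4 * x) (hx' : 4 * x < 1) (ν : ℕ) :
    1 / Real.sqrt (1 - 4 * x) * ((1 - Real.sqrt (1 - 4 * x)) / (2 * x)) ^ ν
      = ∑' k : ℕ, ((ν + 2 * k).choose k : ℝ) * x ^ k := by
  have hx0 : 0 < x := by linarith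
  have h14 : (0 : ℝ) < 1 - 4 * x := by linarith
  set s := Real.sqrt (1 - 4 * x) with hsdef
  have hs : 0 < s := Real.sqrt_pos.mpr h14
  have hs2 : s ^ 2 = 1 - 4 * x := Real.sq_sqrt h14.le
  set y := (1 - s) / (2 * x) with hydef
  have hy : x * y ^ 2 = y - 1 := by
    rw [hydef]
    field_simp
    nlinarith [hs2]
  have hxne : x ≠ 0 := ne_of_gt hx0
  induction ν using Nat.twoStepInduction with
  | zero =>
    simpa using (base0 hx0 hx').symm
  | one =>
    have h := base1rel hx0 hx'
    rw [base0 hx0 hx'] at h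
    rw [← hsdef] at h
    have h2x : (2 * x) ≠ 0 := by positivity
    apply mul_left_cancel₀ h2x
    rw [h, pow_one, hydef]
    field_simp
  | more n ih1 ih2 =>
    have h := frec hx0 hx' n
    rw [← ih1, ← ih2] at h
    apply mul_left_cancel₀ hxne
    have key : x * (1 / s * y ^ (n + 2)) = 1 / s * y ^ (n + 1) - 1 / s * y ^ n := by
      have hyy : x * y ^ (n + 2) = y ^ (n + 1) - y ^ n := by
        calc x * y ^ (n + 2) = x * y ^ 2 * y ^ n := by ring
          _ = (y - 1) * y ^ n := by rw [hy]
          _ = y ^ (n + 1) - y ^ n := by ring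
      calc x * (1 / s * y ^ (n + 2)) = 1 / s * (x * y ^ (n + 2)) := by ring
        _ = 1 / s * (y ^ (n + 1) - y ^ n) := by rw [hyy]
        _ = 1 / s * y ^ (n + 1) - 1 / s * y ^ n := by ring
    rw [key]
    linarith [h]
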